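/- For every integer n ≥ 1 and every j ≥ 1, there exists a real number λ with −b_{j+1} < λ < −μ_j and λ + n² K(λ) = 0; that is, G_n has a real zero in the open interval (−b_{j+1}, −μ_j). -/

import Mathlib

open Filter Topology

/- Indexing convention: the paper's sequences `(a_k)_{k ≥ 1}`, `(b_k)_{k ≥ 1}` are
encoded as functions `a b : ℕ → ℝ`, where index `k : ℕ` corresponds to the paper's
index `k + 1` (so `b 0 = b_1`, etc.). -/

/-- `GPK a b z = K(z) = ∑ a_k / (z + b_k)`. -/
noncomputable def GPK (a b : ℕ → ℝ) (z : ℂ) : ℂ := ∑' k : ℕ, (a k : ℂ) / (z + (b k : ℂ))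

/-- `GPG a b n z = G_n(z) = z + n² K(z)`. -/
noncomputable def GPG (a b : ℕ → ℝ) (n : ℕ) (z : ℂ) : ℂ := z + (n : ℂ) ^ 2 * GPK a b z

section Aux

variable {a b : ℕ → ℝ}

/-- Norm-summability of the terms of `K` at any real point. -/
lemma gp_summable_norm (hsA : Summable a) (ha : ∀ k, 0 < a k)
    (hbtop : Tendsto b atTop atTop) (x : ℝ) :
    Summable (fun k => ‖a k / (x + b k)‖) := by
  apply Summable.of_norm_bounded_eventually_nat hsA
  filter_upwards [hbtop.eventually_ge_atTop (1 - x)] with k hk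
  have h1 : (1:ℝ) ≤ x + b k := by linarith
  rw [norm_norm, Real.norm_eq_abs, abs_div, abs_of_pos (ha k),
    abs_of_pos (by linarith : (0:ℝ) < x + b k)]
  exact div_le_self (ha k).le h1

lemma gp_summable (hsA : Summable a) (ha : ∀ k, 0 < a k)
    (hbtop : Tendsto b atTop atTop) (x : ℝ) :
    Summable (fun k => a k / (x + b k)) :=
  (gp_summable_norm hsA ha hbtop x).of_norm

/-- `K` at a real point is the coercion of the real series. -/
lemma GPK_ofReal (x : ℝ) :
    GPK a b (x : ℂ) = ((∑' k, a k / (x + b k) : ℝ) : ℂ) := by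
  rw [GPK, Complex.ofReal_tsum]
  push_cast
  rfl

end Aux

/-- For every `n ≥ 1` and `j`, `G_n` has a real zero in `(-b_{j+1}, -μ_j)`. -/
theorem real_zero_exists
    (a b : ℕ → ℝ) (α : ℝ)
    (ha : ∀ k, 0 < a k) (hα : 0 < α) (hsum : HasSum a (α ^ 2))
    (hb0 : 0 ≤ b 0) (hbmono : StrictMono b) (hbtop : Tendsto b atTop atTop)
    (μ : ℕ → ℝ)
    (hμ : ∀ j, b j < μ j ∧ μ j < b (j + 1) ∧ GPK a b (-(μ j : ℂ)) = 0)
    (n : ℕ) (hn : 1 ≤ n) (j : ℕ) :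
    ∃ lam : ℝ, -(b (j + 1)) < lam ∧ lam < -(μ j) ∧
      (lam : ℂ) + (n : ℂ) ^ 2 * GPK a b (lam : ℂ) = 0 := by
  classical
  have hsA : Summable a := hsum.summable
  set p := μ j with hp
  set q := b (j + 1) with hq
  obtain ⟨hbp, hpq, hKp⟩ := hμ j
  -- basic positivity
  have hbj0 : 0 ≤ b j := hb0.trans (by
    rcases Nat.eq_zero_or_pos j with h | h
    · simp [h]
    · exact (hbmono h).le)
  have hp0 : 0 < p := lt_of_le_of_lt hbj0 hbp
  have hq0 : 0 < q := hp0.trans hpq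
  have hδ₁ : 0 < p - b j := by linarith
  set δ₁ := p - b j with hδ₁def
  set M : ℝ := (n:ℝ)^2 * α^2 / δ₁ with hM
  have hn' : (0:ℝ) < (n:ℝ) := by exact_mod_cast hn
  have hM0 : 0 < M := by
    rw [hM]; exact div_pos (mul_pos (pow_pos hn' 2) (pow_pos hα 2)) hδ₁
  set B : ℝ := q + M + 1 with hB
  have hB0 : 0 < B := by rw [hB]; linarith
  have hnaj : 0 < (n:ℝ)^2 * a (j+1) := mul_pos (pow_pos hn' 2) (ha _)
  set ε : ℝ := min ((q - p)/2) ((n:ℝ)^2 * a (j+1) / B) with hε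
  have hε0 : 0 < ε := lt_min (by linarith) (div_pos hnaj hB0)
  set c : ℝ := -q + ε with hc
  have hcq : -q < c := by linarith
  have hcp : c < -p := by
    have h1 : ε ≤ (q - p)/2 := min_le_left _ _
    linarith
  have hcqε : c + q = ε := by ring
  -- real series function
  set F : ℝ → ℝ := fun x => ∑' k, a k / (x + b k) with hF
  -- key denominator bounds on Icc c (-p)
  have hden : ∀ k, ∀ x ∈ Set.Icc c (-p), min δ₁ ε ≤ |x + b k| := by
    rintro k x ⟨hx1, hx2⟩
    rcases le_or_gt k j with hk | hk
    · have hbk : b k ≤ b j := hbmono.monotone hk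
      have : x + b k ≤ -δ₁ := by simp only [hδ₁def]; linarith
      calc min δ₁ ε ≤ δ₁ := min_le_left _ _
        _ ≤ |x + b k| := by rw [abs_of_nonpos (by linarith)]; linarith
    · have hbk : q ≤ b k := hbmono.monotone hk
      have : ε ≤ x + b k := by simp only [hq] at hbk ⊢; linarith [hcqε]
      calc min δ₁ ε ≤ ε := min_le_right _ _
        _ ≤ |x + b k| := le_trans this (le_abs_self _)
  have hδ0 : 0 < min δ₁ ε := lt_min hδ₁ hε0
  -- continuity of F on Icc c (-p)
  have hFcont : ContinuousOn F (Set.Icc c (-p)) := by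
    apply continuousOn_tsum (u := fun k => a k / min δ₁ ε)
    · intro k
      apply ContinuousOn.div continuousOn_const (by fun_prop)
      intro x hx
      have h2 := hden k x hx
      intro h0
      rw [h0, abs_zero] at h2
      exact absurd h2 (not_le.mpr hδ0)
    · exact hsA.div_const _
    · intro k x hx
      rw [Real.norm_eq_abs, abs_div, abs_of_pos (ha k)]
      apply div_le_div_of_nonneg_left (ha k).le hδ0 (hden k x hx) |>.trans_eq rfl
  -- F (-p) = 0
  have hFp : F (-p) = 0 := by
    have : GPK a b ((-p : ℝ) : ℂ) = 0 := by push_cast; exact hKp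
    rw [GPK_ofReal] at this
    exact_mod_cast this
  -- lower bound on F c
  have hsumc : Summable (fun k => a k / (c + b k)) := gp_summable hsA ha hbtop c
  have hFc : (n:ℝ)^2 * a (j+1) / ε - M ≤ (n:ℝ)^2 * F c := by
    have hsplit : F c = a (j+1) / (c + b (j+1)) +
        ∑' k, ite (k = j+1) 0 (a k / (c + b k)) := Summable.tsum_eq_add_tsum_ite hsumc (j+1)
    have hrest : -(α^2 / δ₁) ≤ ∑' k, ite (k = j+1) 0 (a k / (c + b k)) := by
      have hsum1 : Summable (fun k => -(a k / δ₁)) := (hsA.div_const _).neg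
      have hsum2 : Summable (fun k => ite (k = j+1) (0:ℝ) (a k / (c + b k))) := by
        apply Summable.of_norm_bounded (gp_summable_norm hsA ha hbtop c)
        intro k
        by_cases h : k = j+1
        · simp [h]; positivity
        · simp [h]
      calc -(α^2 / δ₁) = ∑' k, -(a k / δ₁) := by
            rw [tsum_neg, tsum_div_const, hsum.tsum_eq]
        _ ≤ _ := by
            apply Summable.tsum_le_tsum _ hsum1 hsum2
            intro k
            by_cases h : k = j+1
            · subst h
              simp only [if_true]
              have := div_nonneg (ha (j+1)).le hδ₁.le
              linarith
            · simp only [h, if_false]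
              rcases le_or_gt k j with hk | hk
              · have hbk : b k ≤ b j := hbmono.monotone hk
                have h1 : c + b k ≤ -δ₁ := by simp only [hδ₁def]; linarith
                have h2 : 0 < -(c + b k) := by linarith
                rw [show a k / (c + b k) = -(a k / (-(c + b k))) by
                  rw [div_neg, neg_neg]]
                apply neg_le_neg
                apply div_le_div_of_nonneg_left (ha k).le hδ₁
                linarith
              · have hk2 : j + 1 < k := by omega
                have hbk : q < b k := hbmono (by omega)
                have h1 : 0 < c + b k := by linarith
                have h2 : 0 ≤ a k / (c + b k) := (div_pos (ha k) h1).le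
                have hd : 0 ≤ a k / δ₁ := div_nonneg (ha k).le hδ₁.le
                linarith
    have hterm : a (j+1) / (c + b (j+1)) = a (j+1) / ε := by rw [← hq, hcqε]
    rw [hsplit, hterm, mul_add]
    have h2 : (n:ℝ)^2 * (-(α^2/δ₁)) ≤ (n:ℝ)^2 * ∑' k, ite (k = j+1) 0 (a k / (c + b k)) :=
      mul_le_mul_of_nonneg_left hrest (by positivity)
    have hMeq : (n:ℝ)^2 * (α^2/δ₁) = M := by rw [hM]; ring
    rw [mul_neg, hMeq] at h2
    have h3 : (n:ℝ)^2 * a (j+1) / ε = (n:ℝ)^2 * (a (j+1) / ε) := by ring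
    linarith
  -- g c > 0
  have hεB : ε ≤ (n:ℝ)^2 * a (j+1) / B := min_le_right _ _
  have hBle : B ≤ (n:ℝ)^2 * a (j+1) / ε := by
    rw [le_div_iff₀ hε0]
    calc B * ε ≤ B * ((n:ℝ)^2 * a (j+1) / B) := by
          apply mul_le_mul_of_nonneg_left hεB hB0.le
      _ = (n:ℝ)^2 * a (j+1) := by field_simp
  have hgc : 0 < c + (n:ℝ)^2 * F c := by
    have : (n:ℝ)^2 * a (j+1) / ε - M ≤ (n:ℝ)^2 * F c := hFc
    have hcval : c = -q + ε := hc
    nlinarith [hBle]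
  have hgp : -p + (n:ℝ)^2 * F (-p) < 0 := by rw [hFp]; linarith
  -- IVT
  set g : ℝ → ℝ := fun x => x + (n:ℝ)^2 * F x with hg
  have hgcont : ContinuousOn g (Set.Icc c (-p)) :=
    (continuousOn_id).add (hFcont.const_smul ((n:ℝ)^2))
  have hcp' : c ≤ -p := hcp.le
  have h0mem : (0:ℝ) ∈ Set.Ioo (g (-p)) (g c) := ⟨hgp, hgc⟩
  have := intermediate_value_Ioo' hcp' hgcont h0mem
  obtain ⟨lam, hlam, hglam⟩ := this
  refine ⟨lam, lt_trans hcq hlam.1, hlam.2, ?_⟩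
  rw [GPK_ofReal]
  have h0 : (lam : ℝ) + (n:ℝ)^2 * F lam = 0 := hglam
  have h1 : (lam:ℂ) + (n:ℂ)^2 * ((F lam : ℝ):ℂ) = (((lam + (n:ℝ)^2 * F lam : ℝ)):ℂ) := by
    push_cast; ring
  rw [h1, h0, Complex.ofReal_zero]
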